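/- For any nonnegative integers a and b, the duality relation ζ({1}^a, b+2) = ζ({1}^b, a+2) holds. -/

import Mathlib

open Filter

/-- Limit of partial sums (handles conditionally convergent series). -/
noncomputable def plim (f : ℕ → ℝ) : ℝ := limUnder atTop f

/-- Riemann zeta value `ζ(s) = ∑_{k ≥ 1} 1/k^s`. -/
noncomputable def zetaV (s : ℕ) : ℝ :=
  plim fun N => ∑ k ∈ Finset.Ico 1 (N + 1), 1 / (k : ℝ) ^ s

/-- Alternating zeta value `ζ̄(s) = ∑_{k ≥ 1} (-1)^k/k^s`. -/
noncomputable def zetaBar (s : ℕ) : ℝ :=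
  plim fun N => ∑ k ∈ Finset.Ico 1 (N + 1), (-1 : ℝ) ^ k / (k : ℝ) ^ s

/-- Double zeta value `ζ(a,b) = ∑_{1 ≤ k₁ < k₂} 1/(k₁^a k₂^b)`. -/
noncomputable def zeta2 (a b : ℕ) : ℝ :=
  plim fun N => ∑ k₂ ∈ Finset.Ico 1 (N + 1), ∑ k₁ ∈ Finset.Ico 1 k₂,
    1 / ((k₁ : ℝ) ^ a * (k₂ : ℝ) ^ b)

/-- `ζ(a, b̄) = ∑_{1 ≤ k₁ < k₂} (-1)^{k₂}/(k₁^a k₂^b)` (sign on the outer index). -/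
noncomputable def zeta2barO (a b : ℕ) : ℝ :=
  plim fun N => ∑ k₂ ∈ Finset.Ico 1 (N + 1), ∑ k₁ ∈ Finset.Ico 1 k₂,
    (-1 : ℝ) ^ k₂ / ((k₁ : ℝ) ^ a * (k₂ : ℝ) ^ b)

/-- `ζ(ā, b) = ∑_{1 ≤ k₁ < k₂} (-1)^{k₁}/(k₁^a k₂^b)` (sign on the inner index). -/
noncomputable def zeta2barI (a b : ℕ) : ℝ :=
  plim fun N => ∑ k₂ ∈ Finset.Ico 1 (N + 1), ∑ k₁ ∈ Finset.Ico 1 k₂,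
    (-1 : ℝ) ^ k₁ / ((k₁ : ℝ) ^ a * (k₂ : ℝ) ^ b)

/-- `ζ(ā, b̄) = ∑_{1 ≤ k₁ < k₂} (-1)^{k₁+k₂}/(k₁^a k₂^b)`. -/
noncomputable def zeta2barB (a b : ℕ) : ℝ :=
  plim fun N => ∑ k₂ ∈ Finset.Ico 1 (N + 1), ∑ k₁ ∈ Finset.Ico 1 k₂,
    (-1 : ℝ) ^ (k₁ + k₂) / ((k₁ : ℝ) ^ a * (k₂ : ℝ) ^ b)

/-- Multiple zeta value `ζ(α₁,…,α_r)`. -/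
noncomputable def mzv {r : ℕ} (α : Fin r → ℕ) : ℝ :=
  ∑' k : {f : Fin r → ℕ // StrictMono f ∧ ∀ i, 1 ≤ f i},
    ∏ i, 1 / ((k.1 i : ℝ) ^ α i)

/-- Multiple zeta-star value `ζ⋆(α₁,…,α_r)`. -/
noncomputable def mzvStar {r : ℕ} (α : Fin r → ℕ) : ℝ :=
  ∑' k : {f : Fin r → ℕ // Monotone f ∧ ∀ i, 1 ≤ f i},
    ∏ i, 1 / ((k.1 i : ℝ) ^ α i)

/-- Height-one MZV `ζ({1}^a, b+2)`. -/
noncomputable def heightOne (a b : ℕ) : ℝ :=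
  mzv (Fin.snoc (fun _ : Fin a => 1) (b + 2))

/-- Height-one zeta-star value `ζ⋆({1}^a, b+2)`. -/
noncomputable def heightOneStar (a b : ℕ) : ℝ :=
  mzvStar (Fin.snoc (fun _ : Fin a => 1) (b + 2))

noncomputable section
open scoped ENNReal NNReal

/-- Connector `C(m,n) = m! n! / (m+n)!` as a real number. -/
def Cr (m n : ℕ) : ℝ := (m.factorial * n.factorial : ℝ) / (m + n).factorial

lemma Cr_nonneg (m n : ℕ) : 0 ≤ Cr m n := by
  unfold Cr; positivity

lemma Cr_comm (m n : ℕ) : Cr m n = Cr n m := by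
  unfold Cr; rw [mul_comm, Nat.add_comm]

lemma Cr_zero (m : ℕ) : Cr m 0 = 1 := by
  unfold Cr
  simp
  exact Nat.factorial_ne_zero m

/-- Telescoping identity: `C(m+1,n)/(m+1) = (C(m,n) - C(m+1,n))/n`. -/
lemma Cr_telescope (m n : ℕ) (hn : 1 ≤ n) :
    Cr (m + 1) n / (m + 1) = (Cr m n - Cr (m + 1) n) / n := by
  unfold Cr
  have h1 : ((m + 1 + n).factorial : ℝ) ≠ 0 := by positivity
  have h2 : ((m + n).factorial : ℝ) ≠ 0 := by positivity
  have h3 : ((m:ℝ) + 1) ≠ 0 := by positivity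
  have h4 : (n:ℝ) ≠ 0 := by positivity
  have key : ((m + 1 + n).factorial : ℝ) = (m + 1 + n) * (m + n).factorial := by
    have : m + 1 + n = (m + n) + 1 := by ring
    rw [this, Nat.factorial_succ]; push_cast; ring
  have kf : ((m+1).factorial : ℝ) = (m + 1) * m.factorial := by
    rw [Nat.factorial_succ]; push_cast; ring
  rw [key, kf]
  field_simp
  ring

/-- Decay: `C(m,n) ≤ n!/(m+1)` for `n ≥ 1`. -/
lemma Cr_le (m n : ℕ) (hn : 1 ≤ n) : Cr m n ≤ (n.factorial : ℝ) / (m + 1) := by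
  unfold Cr
  rw [div_le_div_iff₀ (by positivity) (by positivity)]
  have h : ((m+1).factorial : ℝ) ≤ (m + n).factorial := by
    exact_mod_cast Nat.factorial_le (by omega)
  calc (m.factorial * n.factorial : ℝ) * (m + 1)
      = (n.factorial : ℝ) * ((m+1) * m.factorial) := by ring
    _ = (n.factorial : ℝ) * (m+1).factorial := by rw [Nat.factorial_succ]; push_cast; ring
    _ ≤ (n.factorial : ℝ) * (m + n).factorial := by
        apply mul_le_mul_of_nonneg_left h (by positivity)

lemma Cr_tendsto (n : ℕ) (hn : 1 ≤ n) :
    Filter.Tendsto (fun m => Cr m n) Filter.atTop (nhds 0) := by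
  apply squeeze_zero (fun m => Cr_nonneg m n) (fun m => Cr_le m n hn)
  have : Filter.Tendsto (fun m : ℕ => ((m:ℝ) + 1)) Filter.atTop Filter.atTop := by
    apply Filter.tendsto_atTop_add_const_right
    exact tendsto_natCast_atTop_atTop
  simpa using Filter.Tendsto.div_atTop tendsto_const_nhds this

/-- Real version of the key telescoping sum. -/
lemma real_key (n m0 : ℕ) (hn : 1 ≤ n) :
    HasSum (fun m : ℕ => if m0 < m then Cr m n / m else 0) (Cr m0 n / n) := by
  set g : ℕ → ℝ := fun m => if m0 < m then Cr m n / m else 0 with hg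
  have gnn : ∀ m, 0 ≤ g m := by
    intro m; simp only [hg]; split
    · have := Cr_nonneg m n; positivity
    · exact le_rfl
  have psum : ∀ M : ℕ, ∑ j ∈ Finset.range (M + 1), g j
      = (Cr m0 n - Cr (max m0 M) n) / n := by
    intro M
    induction M with
    | zero =>
      have h1 : max m0 0 = m0 := by omega
      simp [hg, h1]
    | succ M ih =>
      rw [Finset.sum_range_succ, ih]
      by_cases h : m0 < M + 1
      · have hM : m0 ≤ M := by omega
        have h1 : max m0 M = M := by omega
        have h2 : max m0 (M + 1) = M + 1 := by omega
        rw [h1, h2]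
        have hMc : ∃ k, M = k := ⟨M, rfl⟩
        simp only [hg, if_pos h]
        rw [show ((M + 1 : ℕ):ℝ) = ((M:ℝ) + 1) by push_cast; ring, Cr_telescope M n hn]
        ring
      · have h1 : max m0 M = m0 := by omega
        have h2 : max m0 (M + 1) = m0 := by omega
        simp only [hg, if_neg h, h1, h2, add_zero]
  have hnR : (0:ℝ) < n := by exact_mod_cast hn
  have hbd : ∀ M : ℕ, ∑ j ∈ Finset.range M, g j ≤ Cr m0 n / n := by
    intro M
    cases M with
    | zero =>
      simp only [Finset.range_zero, Finset.sum_empty]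
      have := Cr_nonneg m0 n
      positivity
    | succ M =>
      rw [psum M]
      gcongr
      exact sub_le_self _ (Cr_nonneg _ _)
  have hsum : Summable g := summable_of_sum_range_le gnn hbd
  have h1 : Filter.Tendsto (fun M => ∑ j ∈ Finset.range (M+1), g j)
      Filter.atTop (nhds (∑' m, g m)) := by
    exact (Filter.tendsto_add_atTop_iff_nat 1).mpr hsum.hasSum.tendsto_sum_nat
  have h2 : Filter.Tendsto (fun M => (Cr m0 n - Cr (max m0 M) n) / n)
      Filter.atTop (nhds ((Cr m0 n - 0) / n)) := by
    apply Filter.Tendsto.div_const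
    apply Filter.Tendsto.const_sub
    exact (Cr_tendsto n hn).comp
      (Filter.tendsto_atTop_mono (fun M => le_max_right m0 M) Filter.tendsto_id)
  have : (∑' m, g m) = Cr m0 n / n := by
    have := tendsto_nhds_unique (by simpa only [psum] using h1) h2
    rw [this, sub_zero]
  exact this ▸ hsum.hasSum

/-- Connector as an extended nonnegative real. -/
def Ce (m n : ℕ) : ℝ≥0∞ := ENNReal.ofReal (Cr m n)

lemma Ce_comm (m n : ℕ) : Ce m n = Ce n m := by rw [Ce, Ce, Cr_comm]

lemma Ce_zero (m : ℕ) : Ce m 0 = 1 := by rw [Ce, Cr_zero, ENNReal.ofReal_one]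

/-- Sum over integers `> m0`. -/
def S (m0 : ℕ) (f : ℕ → ℝ≥0∞) : ℝ≥0∞ := ∑' m : ℕ, if m0 < m then f m else 0

lemma S_congr {f g : ℕ → ℝ≥0∞} (m0 : ℕ) (h : ∀ m, m0 < m → f m = g m) :
    S m0 f = S m0 g := by
  apply tsum_congr; intro m
  by_cases hm : m0 < m
  · simp only [if_pos hm, h m hm]
  · simp only [if_neg hm]

lemma S_mul (m0 : ℕ) (c : ℝ≥0∞) (f : ℕ → ℝ≥0∞) :
    S m0 (fun m => c * f m) = c * S m0 f := by
  rw [S, S, ← ENNReal.tsum_mul_left]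
  apply tsum_congr; intro m
  by_cases hm : m0 < m <;> simp [hm]

lemma S_comm (m0 n0 : ℕ) (F : ℕ → ℕ → ℝ≥0∞) :
    S m0 (fun m => S n0 (fun n => F m n)) = S n0 (fun n => S m0 (fun m => F m n)) := by
  rw [S, S]
  have l : ∀ (k0 k : ℕ) (f : ℕ → ℝ≥0∞),
      (if k0 < k then ∑' j, if n0 < j then f j else 0 else 0)
      = ∑' j, if n0 < j then (if k0 < k then f j else 0) else 0 := by
    intro k0 k f
    by_cases hk : k0 < k
    · simp [hk]
    · simp [hk]
  calc ∑' m, (if m0 < m then ∑' n, (if n0 < n then F m n else 0) else 0)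
      = ∑' (m : ℕ) (n : ℕ), (if n0 < n then (if m0 < m then F m n else 0) else 0) :=
        tsum_congr (fun m => l m0 m _)
    _ = ∑' (n : ℕ) (m : ℕ), (if n0 < n then (if m0 < m then F m n else 0) else 0) :=
        ENNReal.tsum_comm
    _ = ∑' n, (if n0 < n then ∑' m, (if m0 < m then F m n else 0) else 0) := by
        apply tsum_congr; intro n; by_cases hn : n0 < n <;> simp [hn]

/-- Key telescoping identity in `ℝ≥0∞`. -/
lemma S_key (n m0 : ℕ) (hn : 1 ≤ n) :
    S m0 (fun m => ((m : ℝ≥0∞))⁻¹ * Ce m n) = Ce m0 n * ((n : ℝ≥0∞))⁻¹ := by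
  have hterm : ∀ m : ℕ, (if m0 < m then ((m : ℝ≥0∞))⁻¹ * Ce m n else 0)
      = ENNReal.ofReal (if m0 < m then Cr m n / m else 0) := by
    intro m
    by_cases hm : m0 < m
    · have hmpos : (0:ℝ) < m := by exact_mod_cast Nat.lt_of_lt_of_le Nat.zero_lt_one (by omega)
      rw [if_pos hm, if_pos hm, div_eq_inv_mul, ENNReal.ofReal_mul (by positivity)]
      rw [ENNReal.ofReal_inv_of_pos hmpos, ENNReal.ofReal_natCast, Ce]
    · simp [hm]
  rw [S]
  simp only [hterm]
  rw [← ENNReal.ofReal_tsum_of_nonneg ?pos ?simm]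
  case pos =>
    intro m; by_cases hm : m0 < m
    · have := Cr_nonneg m n; simp only [if_pos hm]; positivity
    · simp [hm]
  case simm => exact (real_key n m0 hn).summable
  rw [(real_key n m0 hn).tsum_eq]
  have hnpos : (0:ℝ) < n := by exact_mod_cast hn
  rw [div_eq_mul_inv, ENNReal.ofReal_mul (Cr_nonneg _ _),
    ENNReal.ofReal_inv_of_pos hnpos, ENNReal.ofReal_natCast, Ce]

/-- Symmetric key identity. -/
lemma S_key' (m n0 : ℕ) (hm : 1 ≤ m) :
    S n0 (fun n => ((n : ℝ≥0∞))⁻¹ * Ce m n) = Ce m n0 * ((m : ℝ≥0∞))⁻¹ := by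
  have := S_key m n0 hm
  rw [S_congr n0 (fun n _ => by rw [Ce_comm m n]), this, Ce_comm]

/-- Height-one tail sum `H a s m0 = ∑_{m0 < m₁ < ⋯ < m_{a+1}} 1/(m₁⋯m_a m_{a+1}^s)`. -/
def H : ℕ → ℕ → ℕ → ℝ≥0∞
  | 0, s, m0 => S m0 (fun m => (((m : ℝ≥0∞))⁻¹) ^ s)
  | a+1, s, m0 => S m0 (fun m => ((m : ℝ≥0∞))⁻¹ * H a s m)

/-- Connected tail sum with connector `C(·, n)`. -/
def D : ℕ → ℕ → ℕ → ℕ → ℝ≥0∞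
  | 0, u, n, m0 => S m0 (fun m => (((m : ℝ≥0∞))⁻¹) ^ u * Ce m n)
  | a+1, u, n, m0 => S m0 (fun m => ((m : ℝ≥0∞))⁻¹ * D a u n m)

/-- Chains with a weight on the largest element. -/
def K : ℕ → (ℕ → ℝ≥0∞) → ℕ → ℝ≥0∞
  | 0, w, n0 => w n0
  | y+1, w, n0 => S n0 (fun n => ((n : ℝ≥0∞))⁻¹ * K y w n)

lemma H0_def (s m0 : ℕ) : H 0 s m0 = S m0 (fun m => (((m : ℝ≥0∞))⁻¹) ^ s) := rfl
lemma Hs_def (a s m0 : ℕ) : H (a+1) s m0 = S m0 (fun m => ((m : ℝ≥0∞))⁻¹ * H a s m) := rfl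
lemma Ks_def (y : ℕ) (w : ℕ → ℝ≥0∞) (n0 : ℕ) :
    K (y+1) w n0 = S n0 (fun n => ((n : ℝ≥0∞))⁻¹ * K y w n) := rfl
lemma K0_def (w : ℕ → ℝ≥0∞) (n0 : ℕ) : K 0 w n0 = w n0 := rfl

lemma D_zero (a s m0 : ℕ) : D a s 0 m0 = H a s m0 := by
  induction a generalizing m0 with
  | zero => rw [D, H]; exact S_congr m0 (fun m _ => by rw [Ce_zero, mul_one])
  | succ a ih => rw [D, H]; exact S_congr m0 (fun m _ => by rw [ih])

/-- Transport relation B: lower the exponent on the left, appending a `1` on the right. -/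
lemma transportB (a u n0 m0 : ℕ) :
    D a (u+1) n0 m0 = S n0 (fun n => ((n : ℝ≥0∞))⁻¹ * D a u n m0) := by
  induction a generalizing m0 with
  | zero =>
    rw [D]
    have step : ∀ m : ℕ, m0 < m →
        (((m : ℝ≥0∞))⁻¹) ^ (u+1) * Ce m n0
        = S n0 (fun n => (((m : ℝ≥0∞))⁻¹) ^ u * (((n : ℝ≥0∞))⁻¹ * Ce m n)) := by
      intro m hm
      have h1 : 1 ≤ m := by omega
      rw [S_mul, S_key' m n0 h1, pow_succ]
      rw [mul_assoc, mul_comm (((m : ℝ≥0∞))⁻¹) (Ce m n0)]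
    rw [S_congr m0 step, S_comm]
    apply S_congr; intro n _
    have eq1 : (fun m : ℕ => (((m:ℝ≥0∞))⁻¹)^u * (((n:ℝ≥0∞))⁻¹ * Ce m n))
        = fun m : ℕ => ((n:ℝ≥0∞))⁻¹ * ((((m:ℝ≥0∞))⁻¹)^u * Ce m n) := by
      funext m; ring
    rw [eq1, S_mul, D]
  | succ a ih =>
    rw [D]
    have step : ∀ m : ℕ, m0 < m →
        ((m : ℝ≥0∞))⁻¹ * D a (u+1) n0 m
        = S n0 (fun n => ((m : ℝ≥0∞))⁻¹ * (((n : ℝ≥0∞))⁻¹ * D a u n m)) := by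
      intro m _
      rw [ih, S_mul]
    rw [S_congr m0 step, S_comm]
    apply S_congr; intro n _
    have eq1 : (fun m : ℕ => ((m:ℝ≥0∞))⁻¹ * (((n:ℝ≥0∞))⁻¹ * D a u n m))
        = fun m : ℕ => ((n:ℝ≥0∞))⁻¹ * (((m:ℝ≥0∞))⁻¹ * D a u n m) := by
      funext m; ring
    rw [eq1, S_mul, D]

/-- Transport relation A, fully iterated: peeling off all left `1`s. -/
lemma transportA (a n m0 : ℕ) (hn : 1 ≤ n) :
    D a 1 n m0 = Ce m0 n * (((n : ℝ≥0∞))⁻¹) ^ (a + 1) := by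
  induction a generalizing m0 with
  | zero =>
    rw [D, pow_one]
    have eq1 : (fun m : ℕ => (((m:ℝ≥0∞))⁻¹)^1 * Ce m n)
        = fun m : ℕ => ((m:ℝ≥0∞))⁻¹ * Ce m n := by funext m; rw [pow_one]
    rw [eq1, S_key n m0 hn]
  | succ a ih =>
    rw [D, S_congr m0 (fun m _ => by rw [ih m])]
    have eq1 : (fun m : ℕ => ((m:ℝ≥0∞))⁻¹ * (Ce m n * (((n:ℝ≥0∞))⁻¹) ^ (a+1)))
        = fun m : ℕ => (((n:ℝ≥0∞))⁻¹) ^ (a+1) * (((m:ℝ≥0∞))⁻¹ * Ce m n) := by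
      funext m; ring
    rw [eq1, S_mul, S_key n m0 hn, pow_succ]
    ring

/-- Peel a chain step off `K` from the inside. -/
lemma K_peel (y : ℕ) (w : ℕ → ℝ≥0∞) (n0 : ℕ) :
    K (y+1) w n0 = K y (fun n => S n (fun n' => ((n' : ℝ≥0∞))⁻¹ * w n')) n0 := by
  induction y generalizing n0 with
  | zero => rw [K0_def, Ks_def]; apply S_congr; intro n _; rw [K0_def]
  | succ y ih => rw [Ks_def, Ks_def]; apply S_congr; intro n _; rw [ih n]

lemma K_congr {w w' : ℕ → ℝ≥0∞} (y : ℕ) (h : ∀ n, 1 ≤ n → w n = w' n) :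
    ∀ n0, 1 ≤ n0 → K y w n0 = K y w' n0 := by
  induction y with
  | zero => intro n0 h0; rw [K0_def, K0_def]; exact h n0 h0
  | succ y ih =>
    intro n0 h0
    rw [Ks_def, Ks_def]
    apply S_congr; intro n hn
    rw [ih n (by omega)]

lemma K_congr0 {w w' : ℕ → ℝ≥0∞} (y : ℕ) (h : ∀ n, 1 ≤ n → w n = w' n) :
    K (y+1) w 0 = K (y+1) w' 0 := by
  rw [Ks_def, Ks_def]
  apply S_congr; intro n hn
  rw [K_congr y h n (by omega)]

lemma K_H (y s : ℕ) : ∀ n0, K y (fun n => H 0 s n) n0 = H y s n0 := by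
  induction y with
  | zero => intro n0; rw [K0_def]
  | succ y ih => intro n0; rw [Ks_def, Hs_def]; apply S_congr; intro n _; rw [ih n]

/-- Phase 1: build the right chain while lowering the left exponent. -/
lemma phase1 (a u : ℕ) : ∀ j, H a (u + j) 0 = K j (fun n => D a u n 0) 0 := by
  intro j
  induction j generalizing u with
  | zero => rw [K0_def, Nat.add_zero, D_zero]
  | succ j ih =>
    have h1 : u + (j + 1) = (u + 1) + j := by omega
    rw [h1, ih (u+1)]
    have h2 : (fun n => D a (u+1) n 0)
        = fun n => S n (fun n' => ((n' : ℝ≥0∞))⁻¹ * D a u n' 0) := by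
      funext n; rw [transportB]
    rw [h2, ← K_peel]

/-- The duality in `ℝ≥0∞`. -/
lemma H_duality (a b : ℕ) : H a (b + 2) 0 = H b (a + 2) 0 := by
  have h0 : b + 2 = 1 + (b + 1) := by omega
  rw [h0, phase1 a 1 (b+1)]
  rw [K_congr0 (w' := fun n => (((n : ℝ≥0∞))⁻¹) ^ (a+1)) b (fun n hn => by
    rw [transportA a n 0 hn, Ce_comm, Ce_zero, one_mul])]
  rw [K_peel]
  have h2 : (fun n => S n (fun n' => ((n' : ℝ≥0∞))⁻¹ * (((n' : ℝ≥0∞))⁻¹) ^ (a+1)))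
      = fun n => H 0 (a + 2) n := by
    funext n; rw [H0_def]; apply S_congr; intro n' _
    rw [← pow_succ']
  rw [h2, K_H]

/-- Nested-sum form of the MZV tail. -/
def NEnn : (r : ℕ) → (Fin r → ℕ) → ℕ → ℝ≥0∞
  | 0, _, _ => 1
  | r+1, α, m0 => S m0 (fun m => (((m : ℝ≥0∞))⁻¹) ^ (α 0) * NEnn r (fun i => α i.succ) m)

/-- Splitting off the smallest element of a strictly increasing chain. -/
def chainEquiv (r m0 : ℕ) :
    {f : Fin (r+1) → ℕ // StrictMono f ∧ ∀ i, m0 < f i} ≃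
      Σ m : {m : ℕ // m0 < m}, {g : Fin r → ℕ // StrictMono g ∧ ∀ i, m.1 < g i} where
  toFun f := ⟨⟨f.1 0, f.2.2 0⟩, ⟨fun i => f.1 i.succ,
    fun i j hij => f.2.1 (by exact Fin.succ_lt_succ_iff.mpr hij),
    fun i => f.2.1 (Fin.succ_pos i)⟩⟩
  invFun p := ⟨Fin.cons p.1.1 p.2.1, by
    constructor
    · intro i j hij
      induction j using Fin.cases with
      | zero => exact absurd hij (Fin.not_lt.mpr (Fin.zero_le i))
      | succ j =>
        induction i using Fin.cases with
        | zero =>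
          rw [Fin.cons_zero, Fin.cons_succ]
          exact p.2.2.2 j
        | succ i =>
          rw [Fin.cons_succ, Fin.cons_succ]
          exact p.2.2.1 (by exact Fin.succ_lt_succ_iff.mp hij)
    · intro i
      induction i using Fin.cases with
      | zero => rw [Fin.cons_zero]; exact p.1.2
      | succ i => rw [Fin.cons_succ]; exact lt_trans p.1.2 (p.2.2.2 i)⟩
  left_inv f := by
    apply Subtype.ext
    exact Fin.cons_self_tail f.1
  right_inv p := by
    obtain ⟨⟨m, hm⟩, g, hg⟩ := p
    refine Sigma.ext rfl (heq_of_eq (Subtype.ext ?_))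
    funext i
    simp [Fin.cons_succ]

lemma N0_def (α : Fin 0 → ℕ) (m0 : ℕ) : NEnn 0 α m0 = 1 := rfl
lemma Ns_def (r : ℕ) (α : Fin (r+1) → ℕ) (m0 : ℕ) :
    NEnn (r+1) α m0
      = S m0 (fun m => (((m : ℝ≥0∞))⁻¹) ^ (α 0) * NEnn r (fun i => α i.succ) m) := rfl

lemma tsum_chain (r : ℕ) (α : Fin r → ℕ) (m0 : ℕ) :
    (∑' k : {f : Fin r → ℕ // StrictMono f ∧ ∀ i, m0 < f i},
      ∏ i, (((k.1 i : ℝ≥0∞))⁻¹) ^ α i) = NEnn r α m0 := by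
  induction r generalizing m0 with
  | zero =>
    rw [N0_def]
    have hd : {f : Fin 0 → ℕ // StrictMono f ∧ ∀ i, m0 < f i} :=
      ⟨fun i => i.elim0, fun i _ _ => i.elim0, fun i => i.elim0⟩
    rw [tsum_eq_single hd (fun b hb => absurd (Subsingleton.elim b hd) hb)]
    simp
  | succ r ih =>
    rw [← Equiv.tsum_eq (chainEquiv r m0).symm]
    rw [ENNReal.tsum_sigma']
    have inner : ∀ m : {m : ℕ // m0 < m},
        (∑' g : {g : Fin r → ℕ // StrictMono g ∧ ∀ i, m.1 < g i},
          ∏ i : Fin (r+1), ((((chainEquiv r m0).symm ⟨m, g⟩).1 i : ℝ≥0∞))⁻¹ ^ α i)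
        = (((m.1 : ℝ≥0∞))⁻¹) ^ (α 0) * NEnn r (fun i => α i.succ) m.1 := by
      intro m
      rw [← ih (fun i => α i.succ) m.1, ← ENNReal.tsum_mul_left]
      apply tsum_congr
      intro g
      have hfun : ((chainEquiv r m0).symm ⟨m, g⟩).1 = Fin.cons m.1 g.1 := rfl
      rw [hfun, Fin.prod_univ_succ]
      simp [Fin.cons_zero, Fin.cons_succ]
    calc (∑' (m : {m : ℕ // m0 < m}) (g : {g : Fin r → ℕ // StrictMono g ∧ ∀ i, m.1 < g i}),
          ∏ i : Fin (r+1), ((((chainEquiv r m0).symm ⟨m, g⟩).1 i : ℝ≥0∞))⁻¹ ^ α i)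
        = ∑' m : {m : ℕ // m0 < m},
            (((m.1 : ℝ≥0∞))⁻¹) ^ (α 0) * NEnn r (fun i => α i.succ) m.1 :=
          tsum_congr inner
      _ = NEnn (r+1) α m0 := by
          rw [Ns_def, S]
          refine Eq.trans (tsum_subtype {m : ℕ | m0 < m}
            (fun m => (((m : ℝ≥0∞))⁻¹) ^ (α 0) * NEnn r (fun i => α i.succ) m)) ?_
          apply tsum_congr
          intro m
          rw [Set.indicator_apply]
          rfl

lemma snoc_tail (a b : ℕ) :
    (fun i : Fin (a+1) =>
      (Fin.snoc (fun _ : Fin (a+1) => 1) (b+2) : Fin (a+2) → ℕ) i.succ)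
    = (Fin.snoc (fun _ : Fin a => 1) (b+2) : Fin (a+1) → ℕ) := by
  funext i
  induction i using Fin.lastCases with
  | last => rw [Fin.succ_last, Fin.snoc_last, Fin.snoc_last]
  | cast j => rw [Fin.succ_castSucc, Fin.snoc_castSucc, Fin.snoc_castSucc]

lemma NEnn_snoc (b : ℕ) : ∀ a m0,
    NEnn (a+1) (Fin.snoc (fun _ : Fin a => 1) (b+2)) m0 = H a (b+2) m0 := by
  intro a
  induction a with
  | zero =>
    intro m0
    rw [Ns_def, H0_def]
    apply S_congr
    intro m _
    have h0 : (Fin.snoc (fun _ : Fin 0 => 1) (b+2) : Fin 1 → ℕ) 0 = b + 2 := by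
      rw [show (0 : Fin 1) = Fin.last 0 from rfl, Fin.snoc_last]
    rw [h0, N0_def, mul_one]
  | succ a ih =>
    intro m0
    rw [Ns_def, Hs_def]
    apply S_congr
    intro m _
    have h0 : (Fin.snoc (fun _ : Fin (a+1) => 1) (b+2) : Fin (a+2) → ℕ) 0 = 1 := by
      rw [show (0 : Fin (a+2)) = Fin.castSucc 0 from rfl, Fin.snoc_castSucc]
    rw [h0, pow_one, snoc_tail, ih]

lemma mzv_toReal (r : ℕ) (α : Fin r → ℕ) : mzv α = (NEnn r α 0).toReal := by
  rw [← tsum_chain r α 0, mzv]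
  have hne : ∀ k : {f : Fin r → ℕ // StrictMono f ∧ ∀ i, (0:ℕ) < f i},
      (∏ i, (((k.1 i : ℝ≥0∞))⁻¹) ^ α i) ≠ ∞ := by
    intro k
    apply ENNReal.prod_ne_top
    intro i _
    apply ENNReal.pow_ne_top
    exact ENNReal.inv_ne_top.mpr (Nat.cast_ne_zero.mpr (Nat.pos_iff_ne_zero.mp (k.2.2 i)))
  rw [ENNReal.tsum_toReal_eq hne]
  apply tsum_congr
  intro k
  rw [ENNReal.toReal_prod]
  apply Finset.prod_congr rfl
  intro i _
  rw [ENNReal.toReal_pow, ENNReal.toReal_inv, ENNReal.toReal_natCast]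
  rw [inv_pow, one_div]

/-- `heightOne` as `toReal` of the `ℝ≥0∞`-valued nested sum. -/
lemma heightOne_toReal (a b : ℕ) : heightOne a b = (H a (b + 2) 0).toReal := by
  rw [heightOne, mzv_toReal, NEnn_snoc]

theorem height_one_duality (a b : ℕ) : heightOne a b = heightOne b a := by
  rw [heightOne_toReal, heightOne_toReal, H_duality]
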